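/- In the optimistic projected-gradient scheme y_t = Π_C(y'_t - η m_t), y'_{t+1} = Π_C(y'_t - η ĝ_t) on a closed convex set C with diameter at most D, for any comparator sequence (u'_t)_{t=1}^T ⊆ C: Σ_{t=1}^T ⟨ĝ_t, y_t - u'_t⟩ ≤ (D² + 2D P_T)/(2η) + η Σ_{t=1}^T ‖ĝ_t - m_t‖², where P_T = Σ_{t=2}^T ‖u'_t - u'_{t-1}‖. -/

import Mathlib

open scoped RealInnerProductSpace

section Aux

variable {E : Type*} [NormedAddCommGroup E] [InnerProductSpace ℝ E]

lemma inner_id_aux (a b c : E) :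
    ⟪a - b, b - c⟫ = (‖a - c‖ ^ 2 - ‖a - b‖ ^ 2 - ‖b - c‖ ^ 2) / 2 := by
  have h := norm_add_sq_real (a - b) (b - c)
  have h2 : a - b + (b - c) = a - c := by abel
  rw [h2] at h
  linarith

end Aux

set_option maxHeartbeats 1000000 in
/-- In the optimistic projected-gradient scheme
`y_t = Π_C(y'_t - η m_t)`, `y'_{t+1} = Π_C(y'_t - η ĝ_t)` on a nonempty closed convex
set `C` of diameter at most `D`, for any comparator sequence `(u'_t)_{t=1}^T ⊆ C`:
`Σ_{t=1}^T ⟨ĝ_t, y_t - u'_t⟩ ≤ (D² + 2D P_T)/(2η) + η Σ_{t=1}^T ‖ĝ_t - m_t‖²`,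
where `P_T = Σ_{t=2}^T ‖u'_t - u'_{t-1}‖`. -/
theorem optimistic_projected_gradient_dynamic_regret {d : ℕ}
    (C : Set (EuclideanSpace ℝ (Fin d))) (hconv : Convex ℝ C)
    (hclosed : IsClosed C) (hne : C.Nonempty)
    (D : ℝ) (hD : ∀ x ∈ C, ∀ y ∈ C, ‖x - y‖ ≤ D)
    (P : EuclideanSpace ℝ (Fin d) → EuclideanSpace ℝ (Fin d))
    (hP : ∀ u, P u ∈ C ∧ ∀ w ∈ C, ‖u - P u‖ ≤ ‖u - w‖)
    (η : ℝ) (hη : 0 < η)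
    (m g y y' u : ℕ → EuclideanSpace ℝ (Fin d))
    (hy'1 : y' 1 ∈ C)
    (hy : ∀ t, y t = P (y' t - η • m t))
    (hy' : ∀ t, y' (t + 1) = P (y' t - η • g t))
    (hu : ∀ t, u t ∈ C)
    (T : ℕ) (hT : 1 ≤ T) :
    ∑ t ∈ Finset.Icc 1 T, ⟪g t, y t - u t⟫ ≤
      (D ^ 2 + 2 * D * ∑ t ∈ Finset.Icc 2 T, ‖u t - u (t - 1)‖) / (2 * η)
        + η * ∑ t ∈ Finset.Icc 1 T, ‖g t - m t‖ ^ 2 := by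
  obtain ⟨x0, hx0⟩ := hne
  haveI : Nonempty C := ⟨⟨x0, hx0⟩⟩
  have hPmem : ∀ x, P x ∈ C := fun x => (hP x).1
  have h2η : (0:ℝ) < 2 * η := by linarith
  -- variational inequality for the projection
  have hVI : ∀ x, ∀ w ∈ C, ⟪x - P x, w - P x⟫ ≤ 0 := by
    intro x w hw
    have hbdd : BddBelow (Set.range fun w : C => ‖x - (w : EuclideanSpace ℝ (Fin d))‖) := by
      refine ⟨0, ?_⟩
      rintro nn ⟨w, rfl⟩
      exact norm_nonneg _
    have h1 : ‖x - P x‖ = ⨅ w : C, ‖x - w‖ := by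
      apply le_antisymm
      · exact le_ciInf fun w => (hP x).2 w w.2
      · exact ciInf_le (f := fun w : C => ‖x - (w : EuclideanSpace ℝ (Fin d))‖) hbdd
          ⟨P x, hPmem x⟩
    exact ((norm_eq_iInf_iff_real_inner_le_zero hconv (hPmem x)).1 h1) w hw
  have hy'mem : ∀ t, 1 ≤ t → y' t ∈ C := by
    intro t ht
    induction t with
    | zero => omega
    | succ n ih =>
      rcases Nat.eq_or_lt_of_le ht with h | h
      · exact h ▸ hy'1
      · rw [hy' n]; exact hPmem _
  -- per-step inequality
  have step : ∀ t : ℕ, ⟪g t, y t - u t⟫ ≤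
      η * ‖g t - m t‖ ^ 2 +
        (‖y' t - u t‖ ^ 2 - ‖y' (t + 1) - u t‖ ^ 2) / (2 * η) := by
    intro t
    set a := y' t
    set b := y t
    set c := y' (t + 1)
    set w := u t
    set M := m t
    set G := g t
    have hVI1 : ⟪(a - η • M) - b, c - b⟫ ≤ 0 := by
      have := hVI (a - η • M) c (hy'mem (t + 1) (Nat.le_add_left 1 t))
      rwa [← hy t] at this
    have hVI2 : ⟪(a - η • G) - c, w - c⟫ ≤ 0 := by
      have := hVI (a - η • G) w (hu t)
      rwa [← hy' t] at this
    have e1 : ⟪(a - η • M) - b, c - b⟫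
        = ⟪a - b, c - b⟫ - η * ⟪M, c - b⟫ := by
      have hab : (a - η • M) - b = (a - b) - η • M := by abel
      rw [hab, inner_sub_left, real_inner_smul_left]
    have e2 : ⟪(a - η • G) - c, w - c⟫
        = ⟪a - c, w - c⟫ - η * ⟪G, w - c⟫ := by
      have hac : (a - η • G) - c = (a - c) - η • G := by abel
      rw [hac, inner_sub_left, real_inner_smul_left]
    rw [e1] at hVI1
    rw [e2] at hVI2
    have id1 : ⟪a - b, b - c⟫ = (‖a - c‖ ^ 2 - ‖a - b‖ ^ 2 - ‖b - c‖ ^ 2) / 2 :=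
      inner_id_aux a b c
    have id2 : ⟪a - c, c - w⟫ = (‖a - w‖ ^ 2 - ‖a - c‖ ^ 2 - ‖c - w‖ ^ 2) / 2 :=
      inner_id_aux a c w
    have flip1 : ⟪a - b, c - b⟫ = - ⟪a - b, b - c⟫ := by
      rw [← inner_neg_right]; congr 1; abel
    have flip2 : ⟪a - c, w - c⟫ = - ⟪a - c, c - w⟫ := by
      rw [← inner_neg_right]; congr 1; abel
    -- Young's inequality
    have cs : ⟪G - M, b - c⟫ ≤ ‖G - M‖ * ‖b - c‖ := real_inner_le_norm _ _
    have young : η * ⟪G - M, b - c⟫ ≤ η ^ 2 * ‖G - M‖ ^ 2 + ‖b - c‖ ^ 2 / 4 := by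
      nlinarith [sq_nonneg (η * ‖G - M‖ - ‖b - c‖ / 2), norm_nonneg (b - c),
        norm_nonneg (G - M), mul_le_mul_of_nonneg_left cs (le_of_lt hη)]
    have tri : ‖b - c‖ ≤ ‖b - a‖ + ‖a - c‖ := norm_sub_le_norm_sub_add_norm_sub b a c
    have hba : ‖b - a‖ = ‖a - b‖ := norm_sub_rev b a
    have tri2 : ‖b - c‖ ^ 2 ≤ 2 * ‖a - b‖ ^ 2 + 2 * ‖a - c‖ ^ 2 := by
      nlinarith [norm_nonneg (b - c), norm_nonneg (a - b), norm_nonneg (a - c),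
        sq_nonneg (‖a - b‖ - ‖a - c‖)]
    -- decompose the regret term
    have decomp : ⟪G, b - w⟫
        = ⟪G - M, b - c⟫ + ⟪M, b - c⟫ + ⟪G, c - w⟫ := by
      rw [inner_sub_left]
      have h1 : ⟪G, b - c⟫ + ⟪G, c - w⟫ = ⟪G, b - w⟫ := by
        rw [← inner_add_right]; congr 1; abel
      linarith
    have negM : ⟪M, b - c⟫ = - ⟪M, c - b⟫ := by
      rw [← inner_neg_right]; congr 1; abel
    have negG : ⟪G, c - w⟫ = - ⟪G, w - c⟫ := by
      rw [← inner_neg_right]; congr 1; abel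
    have key : η * ⟪G, b - w⟫ ≤ η ^ 2 * ‖G - M‖ ^ 2 +
        (‖a - w‖ ^ 2 - ‖c - w‖ ^ 2) / 2 := by
      have hM : η * ⟪M, b - c⟫ ≤ (‖a - c‖ ^ 2 - ‖a - b‖ ^ 2 - ‖b - c‖ ^ 2) / 2 := by
        rw [negM, ← id1]; rw [flip1] at hVI1; linarith
      have hG : η * ⟪G, c - w⟫ ≤ (‖a - w‖ ^ 2 - ‖a - c‖ ^ 2 - ‖c - w‖ ^ 2) / 2 := by
        rw [negG, ← id2]; rw [flip2] at hVI2; linarith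
      rw [decomp, mul_add, mul_add]
      linarith [sq_nonneg ‖b - c‖, sq_nonneg ‖a - b‖]
    have expand : η * (η * ‖G - M‖ ^ 2 + (‖a - w‖ ^ 2 - ‖c - w‖ ^ 2) / (2 * η))
        = η ^ 2 * ‖G - M‖ ^ 2 + (‖a - w‖ ^ 2 - ‖c - w‖ ^ 2) / 2 := by
      field_simp
    have hmul : η * ⟪G, b - w⟫
        ≤ η * (η * ‖G - M‖ ^ 2 + (‖a - w‖ ^ 2 - ‖c - w‖ ^ 2) / (2 * η)) := by
      rw [expand]; exact key
    exact (mul_le_mul_iff_of_pos_left hη).mp hmul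
  -- comparator switch bound
  have hD0 : 0 ≤ D := by
    have := hD x0 hx0 x0 hx0
    simpa using this
  have switch : ∀ p ∈ C, ∀ q ∈ C, ∀ r ∈ C,
      ‖p - q‖ ^ 2 - ‖p - r‖ ^ 2 ≤ 2 * D * ‖q - r‖ := by
    intro p hp q hq r hr
    have h1 : ‖p - q‖ ≤ ‖p - r‖ + ‖r - q‖ := norm_sub_le_norm_sub_add_norm_sub p r q
    have h2 : ‖r - q‖ = ‖q - r‖ := norm_sub_rev r q
    have h3 : ‖p - q‖ ≤ D := hD p hp q hq
    have h4 : ‖p - r‖ ≤ D := hD p hp r hr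
    nlinarith [norm_nonneg (p - q), norm_nonneg (p - r), norm_nonneg (q - r)]
  -- main induction
  have main : ∀ S : ℕ, 1 ≤ S →
      ∑ t ∈ Finset.Icc 1 S, ⟪g t, y t - u t⟫ ≤
        (‖y' 1 - u 1‖ ^ 2 - ‖y' (S + 1) - u S‖ ^ 2
          + 2 * D * ∑ t ∈ Finset.Icc 2 S, ‖u t - u (t - 1)‖) / (2 * η)
          + η * ∑ t ∈ Finset.Icc 1 S, ‖g t - m t‖ ^ 2 := by
    intro S hS
    induction S with
    | zero => omega
    | succ n ih =>
      rcases Nat.eq_or_lt_of_le hS with h | h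
      · have hn : n = 0 := by omega
        subst hn
        rw [Finset.Icc_eq_empty (by omega : ¬ (2:ℕ) ≤ 1)]
        simp only [Finset.Icc_self, Finset.sum_singleton, Finset.sum_empty, mul_zero, add_zero]
        have := step 1
        linarith
      · have hn : 1 ≤ n := by omega
        have IH := ih hn
        have hsum1 : ∑ t ∈ Finset.Icc 1 (n + 1), ⟪g t, y t - u t⟫
            = (∑ t ∈ Finset.Icc 1 n, ⟪g t, y t - u t⟫)
              + ⟪g (n + 1), y (n + 1) - u (n + 1)⟫ :=
          Finset.sum_Icc_succ_top (by omega) _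
        have hsum2 : ∑ t ∈ Finset.Icc 1 (n + 1), ‖g t - m t‖ ^ 2
            = (∑ t ∈ Finset.Icc 1 n, ‖g t - m t‖ ^ 2) + ‖g (n + 1) - m (n + 1)‖ ^ 2 :=
          Finset.sum_Icc_succ_top (by omega) _
        have hsum3 : ∑ t ∈ Finset.Icc 2 (n + 1), ‖u t - u (t - 1)‖
            = (∑ t ∈ Finset.Icc 2 n, ‖u t - u (t - 1)‖) + ‖u (n + 1) - u n‖ := by
          have h := Finset.sum_Icc_succ_top (a := 2) (b := n) (by omega)
            (fun t => ‖u t - u (t - 1)‖)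
          simpa using h
        have hsw : ‖y' (n + 1) - u (n + 1)‖ ^ 2 - ‖y' (n + 1) - u n‖ ^ 2
            ≤ 2 * D * ‖u (n + 1) - u n‖ :=
          switch (y' (n + 1)) (hy'mem (n + 1) (by omega)) (u (n + 1)) (hu _) (u n) (hu _)
        have hstep := step (n + 1)
        rw [hsum1, hsum2, hsum3]
        set A := ‖y' 1 - u 1‖ ^ 2
        set B1 := ‖y' (n + 1) - u n‖ ^ 2
        set B2 := ‖y' (n + 1) - u (n + 1)‖ ^ 2
        set B3 := ‖y' (n + 1 + 1) - u (n + 1)‖ ^ 2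
        set Qn := ∑ t ∈ Finset.Icc 2 n, ‖u t - u (t - 1)‖
        set v := ‖u (n + 1) - u n‖
        have hnum : (A - B1 + 2 * D * Qn) + (B2 - B3)
            ≤ A - B3 + 2 * D * (Qn + v) := by linarith
        have hdiv : ((A - B1 + 2 * D * Qn) + (B2 - B3)) / (2 * η)
            ≤ (A - B3 + 2 * D * (Qn + v)) / (2 * η) :=
          (div_le_div_iff_of_pos_right h2η).mpr hnum
        have hsplit : (A - B1 + 2 * D * Qn) / (2 * η) + (B2 - B3) / (2 * η)
            = ((A - B1 + 2 * D * Qn) + (B2 - B3)) / (2 * η) := by ring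
        linarith
  -- conclude
  have hA : ‖y' 1 - u 1‖ ≤ D := hD _ (hy'mem 1 le_rfl) _ (hu 1)
  have hA2 : ‖y' 1 - u 1‖ ^ 2 ≤ D ^ 2 := by
    nlinarith [norm_nonneg (y' 1 - u 1)]
  have hB : (0:ℝ) ≤ ‖y' (T + 1) - u T‖ ^ 2 := sq_nonneg _
  have hmain := main T hT
  have hnum : ‖y' 1 - u 1‖ ^ 2 - ‖y' (T + 1) - u T‖ ^ 2
      + 2 * D * ∑ t ∈ Finset.Icc 2 T, ‖u t - u (t - 1)‖
      ≤ D ^ 2 + 2 * D * ∑ t ∈ Finset.Icc 2 T, ‖u t - u (t - 1)‖ := by linarith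
  have hdiv := (div_le_div_iff_of_pos_right h2η).mpr hnum
  linarith
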